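/- arXiv:2206.00848 — 7 statements merged into one kernel-verified Lean document; each statement's English description precedes it below -/
import Mathlib

section
/- Let G be a group with left-invariant total order < with positive cone P = {g : 1 < g}, and let C be a subgroup of G. If P \ C is a union of left C-cosets (i.e., g ∈ P \ C and c ∈ C imply gc ∈ P \ C), then C is convex with respect to <. -/
/-- Convexity of a subgroup with respect to a left-order. -/
def IsConvexSubgroup {G : Type*} [Group G] [LinearOrder G] (C : Subgroup G) : Prop :=
  ∀ c₁ ∈ C, ∀ c₂ ∈ C, ∀ g : G, c₁ < g → g < c₂ → g ∈ C

/-- If `P \ C` is a union of left `C`-cosets, where `P = {g : 1 < g}` is the positive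
cone of a left-order, then `C` is convex with respect to that order. -/
theorem convex_of_pos_cone_diff_union_left_cosets {G : Type*} [Group G] [LinearOrder G]
    [CovariantClass G G (· * ·) (· < ·)] (C : Subgroup G)
    (h : ∀ g : G, 1 < g → g ∉ C → ∀ c ∈ C, 1 < g * c ∧ g * c ∉ C) :
    IsConvexSubgroup C := by
  intro c₁ hc₁ c₂ hc₂ g h₁ h₂
  by_contra hg
  have hy : (1 : G) < g⁻¹ * c₂ := by
    have := mul_lt_mul_right h₂ g⁻¹
    simpa using this
  have hyC : g⁻¹ * c₂ ∉ C := fun hmem => hg (by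
    have : (g⁻¹ * c₂) * c₂⁻¹ ∈ C := C.mul_mem hmem (C.inv_mem hc₂)
    simpa using C.inv_mem this)
  have hc : c₂⁻¹ * c₁ ∈ C := C.mul_mem (C.inv_mem hc₂) hc₁
  have := (h _ hy hyC _ hc).1
  have h3 : (1 : G) < g⁻¹ * c₁ := by
    have e : g⁻¹ * c₂ * (c₂⁻¹ * c₁) = g⁻¹ * c₁ := by group
    rwa [e] at this
  have : g * 1 < g * (g⁻¹ * c₁) := mul_lt_mul_right h3 g
  simp at this
  exact absurd h₁ (not_lt_of_gt this)
end

section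
/- Convex swap preserves positive cones: let (G, <₁) be a left-ordered group with positive cone P₁ and C a convex subgroup of G. If <₂ is another left-order on G with positive cone P₂ satisfying P₁ \ C = P₂ \ C, then C is convex with respect to <₂. -/
/-- `P` is the positive cone of a left-order on `G`: a subsemigroup with
`G = P ⊔ {1} ⊔ P⁻¹`. -/
def IsLeftOrderCone {G : Type*} [Group G] (P : Set G) : Prop :=
  (∀ a ∈ P, ∀ b ∈ P, a * b ∈ P) ∧ (1 : G) ∉ P ∧ ∀ g : G, g ≠ 1 → (g ∈ P ↔ g⁻¹ ∉ P)

/-- `C` is convex with respect to the left-order with positive cone `P`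
(the order `g < h ↔ g⁻¹ * h ∈ P`). -/
def IsConeConvex {G : Type*} [Group G] (P : Set G) (C : Subgroup G) : Prop :=
  ∀ c₁ ∈ C, ∀ c₂ ∈ C, ∀ g : G, c₁⁻¹ * g ∈ P → g⁻¹ * c₂ ∈ P → g ∈ C

/-- Convex swap preserves convexity: if `C` is convex for the order with cone `P₁`
and `P₂` is another left-order cone with `P₁ \ C = P₂ \ C`, then `C` is convex for
the order with cone `P₂`. -/
theorem convex_swap_preserves_convexity {G : Type*} [Group G] (P₁ P₂ : Set G)
    (C : Subgroup G) (h₁ : IsLeftOrderCone P₁) (h₂ : IsLeftOrderCone P₂)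
    (hconv : IsConeConvex P₁ C) (hswap : P₁ \ (C : Set G) = P₂ \ (C : Set G)) :
    IsConeConvex P₂ C := by
  intro c₁ hc₁ c₂ hc₂ g hg₁ hg₂
  by_contra hg
  have h1 : c₁⁻¹ * g ∉ (C : Set G) := by
    intro h
    exact hg (by simpa using C.mul_mem hc₁ h)
  have h2 : g⁻¹ * c₂ ∉ (C : Set G) := by
    intro h
    exact hg (by simpa using C.mul_mem hc₂ (C.inv_mem h))
  have m1 : c₁⁻¹ * g ∈ P₁ := ((hswap ▸ (Set.mem_diff _).2 ⟨hg₁, h1⟩ : _ ∈ P₁ \ (C : Set G))).1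
  have m2 : g⁻¹ * c₂ ∈ P₁ := ((hswap ▸ (Set.mem_diff _).2 ⟨hg₂, h2⟩ : _ ∈ P₁ \ (C : Set G))).1
  exact hg (hconv c₁ hc₁ c₂ hc₂ g m1 m2)
end

section
/- Replacing the order on a convex subgroup yields a left-order: let G be a group with a left-order having positive cone P₁, let C be a convex subgroup, and let P₀ ⊆ C be the positive cone of a left-order on C (so C = P₀ ⊔ {1} ⊔ P₀⁻¹ and P₀ is a subsemigroup). Then S = P₀ ∪ (P₁ \ C) satisfies G = S ⊔ {1} ⊔ S⁻¹ and S is closed under multiplication; hence S is the positive cone of a left-order on G. -/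
/-- Replacing the order on a convex subgroup yields a left-order: if `P₁` is the cone
of a left-order on `G`, `C` is convex with respect to it, and `P₀ ⊆ C` is the
positive cone of a left-order on `C`, then `P₀ ∪ (P₁ \ C)` is the positive cone of
a left-order on `G`. -/
theorem cone_of_convex_swap {G : Type*} [Group G] (P₁ P₀ : Set G) (C : Subgroup G)
    (h₁ : IsLeftOrderCone P₁) (hconv : IsConeConvex P₁ C) (hP₀C : P₀ ⊆ (C : Set G))
    (hP₀mul : ∀ a ∈ P₀, ∀ b ∈ P₀, a * b ∈ P₀) (hP₀one : (1 : G) ∉ P₀)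
    (hP₀part : ∀ c ∈ C, c ≠ (1 : G) → (c ∈ P₀ ↔ c⁻¹ ∉ P₀)) :
    IsLeftOrderCone (P₀ ∪ (P₁ \ (C : Set G))) := by
  obtain ⟨h₁mul, h₁one, h₁tri⟩ := h₁
  refine ⟨?_, ?_, ?_⟩
  · rintro a (ha | ⟨haP, haC⟩) b (hb | ⟨hbP, hbC⟩)
    · exact Or.inl (hP₀mul a ha b hb)
    · -- a ∈ P₀ ⊆ C, b ∈ P₁ \ C
      have haC : a ∈ C := hP₀C ha
      refine Or.inr ⟨?_, fun h => hbC ?_⟩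
      · by_contra hab
        have hne : a * b ≠ 1 := fun h => hbC (by
          have : b = a⁻¹ := eq_inv_of_mul_eq_one_right h
          rw [this]; exact C.inv_mem haC)
        have : (a * b)⁻¹ ∈ P₁ := by
          by_contra h'
          exact hab ((h₁tri (a * b) hne).mpr h')
        rw [mul_inv_rev] at this
        exact hbC (hconv 1 C.one_mem a⁻¹ (C.inv_mem haC) b (by simpa using hbP)
          (by simpa using this))
      · have : b = a⁻¹ * (a * b) := by group
        rw [this]; exact C.mul_mem (C.inv_mem haC) h
    · -- a ∈ P₁ \ C, b ∈ P₀ ⊆ C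
      have hbC : b ∈ C := hP₀C hb
      refine Or.inr ⟨?_, fun h => haC ?_⟩
      · by_contra hab
        have hne : a * b ≠ 1 := fun h => haC (by
          have : a = b⁻¹ := eq_inv_of_mul_eq_one_left h
          rw [this]; exact C.inv_mem hbC)
        have hinv : (a * b)⁻¹ ∈ P₁ := by
          by_contra h'
          exact hab ((h₁tri (a * b) hne).mpr h')
        rw [mul_inv_rev] at hinv
        have : a⁻¹ ∈ C := hconv b hbC 1 C.one_mem a⁻¹
          (by simpa using hinv) (by simpa using haP)
        exact haC (by simpa using C.inv_mem this)
      · have : a = (a * b) * b⁻¹ := by group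
        rw [this]; exact C.mul_mem h (C.inv_mem hbC)
    · -- both in P₁ \ C
      refine Or.inr ⟨h₁mul a haP b hbP, fun h => haC ?_⟩
      exact hconv 1 C.one_mem (a * b) h a (by simpa using haP) (by simpa using hbP)
  · rintro (h | ⟨_, hC⟩)
    · exact hP₀one h
    · exact hC C.one_mem
  · intro g hg
    constructor
    · rintro (h | ⟨hP, hC⟩)
      · rintro (h' | ⟨_, hC'⟩)
        · exact ((hP₀part g (hP₀C h) hg).mp h) h'
        · exact hC' (C.inv_mem (hP₀C h))
      · rintro (h' | ⟨hP', _⟩)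
        · exact hC (by simpa using C.inv_mem (hP₀C h'))
        · exact ((h₁tri g hg).mp hP) hP'
    · intro h
      by_cases hgC : g ∈ C
      · refine Or.inl ((hP₀part g hgC hg).mpr fun h' => h (Or.inl h'))
      · refine Or.inr ⟨?_, hgC⟩
        have hginv : g⁻¹ ∉ P₁ := fun h' => h (Or.inr ⟨h', fun hc =>
          hgC (by simpa using C.inv_mem hc)⟩)
        exact (h₁tri g hg).mpr hginv
end

section
/- Order extension from a point stabilizer: suppose a nontrivial group G acts by order-preserving bijections on a linearly ordered set (E, <ₑ), x ∈ E, and <₀ is a left-invariant total order on the stabilizer Stab(x). Then the relation g₁ < g₂ defined by: (1 <₀ g₁⁻¹g₂ when g₁⁻¹g₂ ∈ Stab(x)) and (g₁·x <ₑ g₂·x when g₁⁻¹g₂ ∉ Stab(x)), is a left-invariant total order on G, and Stab(x) is convex with respect to it. -/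
/-- Order extension from a point stabilizer: if a nontrivial group `G` acts by
order-preserving bijections on a linear order `E`, `x ∈ E`, and `r₀` is a
left-invariant strict total order on `Stab(x)`, then the relation
`g₁ < g₂ ↔ (g₁⁻¹g₂ ∈ Stab(x) ∧ 1 <₀ g₁⁻¹g₂) ∨ (g₁⁻¹g₂ ∉ Stab(x) ∧ g₁·x < g₂·x)`
is a left-invariant strict total order on `G`, and `Stab(x)` is convex. -/
theorem order_from_stabilizer {G E : Type*} [Group G] [Nontrivial G] [MulAction G E]
    [LinearOrder E] (hact : ∀ g : G, ∀ y z : E, y < z → g • y < g • z) (x : E)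
    (r₀ : MulAction.stabilizer G x → MulAction.stabilizer G x → Prop)
    (h₀ : IsStrictTotalOrder (MulAction.stabilizer G x) r₀)
    (h₀inv : ∀ k a b : MulAction.stabilizer G x, r₀ a b → r₀ (k * a) (k * b)) :
    ∃ R : G → G → Prop,
      (∀ g₁ g₂ : G, R g₁ g₂ ↔
        ((∃ h : g₁⁻¹ * g₂ ∈ MulAction.stabilizer G x, r₀ 1 ⟨g₁⁻¹ * g₂, h⟩) ∨
          (g₁⁻¹ * g₂ ∉ MulAction.stabilizer G x ∧ g₁ • x < g₂ • x))) ∧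
      IsStrictTotalOrder G R ∧
      (∀ k g₁ g₂ : G, R g₁ g₂ → R (k * g₁) (k * g₂)) ∧
      (∀ c₁ ∈ MulAction.stabilizer G x, ∀ c₂ ∈ MulAction.stabilizer G x,
        ∀ g : G, R c₁ g → R g c₂ → g ∈ MulAction.stabilizer G x) := by
  classical
  have memiff : ∀ g₁ g₂ : G, g₁⁻¹ * g₂ ∈ MulAction.stabilizer G x ↔ g₁ • x = g₂ • x := by
    intro g₁ g₂
    rw [MulAction.mem_stabilizer_iff, mul_smul, inv_smul_eq_iff]
    exact eq_comm
  let R : G → G → Prop := fun g₁ g₂ =>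
    (∃ h : g₁⁻¹ * g₂ ∈ MulAction.stabilizer G x, r₀ 1 ⟨g₁⁻¹ * g₂, h⟩) ∨
      (g₁⁻¹ * g₂ ∉ MulAction.stabilizer G x ∧ g₁ • x < g₂ • x)
  have tri : ∀ g₁ g₂ : G, R g₁ g₂ ∨ g₁ = g₂ ∨ R g₂ g₁ := by
    intro g₁ g₂
    by_cases hm : g₁⁻¹ * g₂ ∈ MulAction.stabilizer G x
    · rcases (haveI := h₀; trichotomous_of r₀ 1 ⟨g₁⁻¹ * g₂, hm⟩) with h | h | h
      · exact Or.inl (Or.inl ⟨hm, h⟩)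
      · refine Or.inr (Or.inl ?_)
        have h1 : g₁⁻¹ * g₂ = 1 := by
          have := congrArg Subtype.val h
          simpa using this.symm
        have := mul_eq_one_iff_inv_eq.mp h1
        simpa using this
      · refine Or.inr (Or.inr (Or.inl ?_))
        have hm' : g₂⁻¹ * g₁ ∈ MulAction.stabilizer G x := by
          have := (MulAction.stabilizer G x).inv_mem hm
          simpa using this
        refine ⟨hm', ?_⟩
        have key := h₀inv (⟨g₁⁻¹ * g₂, hm⟩)⁻¹ _ _ h
        have e1 : (⟨g₁⁻¹ * g₂, hm⟩ : MulAction.stabilizer G x)⁻¹ * ⟨g₁⁻¹ * g₂, hm⟩ = 1 := by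
          group
        have e2 : (⟨g₁⁻¹ * g₂, hm⟩ : MulAction.stabilizer G x)⁻¹ * 1 = ⟨g₂⁻¹ * g₁, hm'⟩ := by
          ext; simp [mul_inv_rev]
        rw [e1, e2] at key
        exact key
    · have hm' : g₂⁻¹ * g₁ ∉ MulAction.stabilizer G x := by
        intro h
        exact hm (by simpa using (MulAction.stabilizer G x).inv_mem h)
      have hne : g₁ • x ≠ g₂ • x := fun h => hm ((memiff g₁ g₂).mpr h)
      rcases lt_or_gt_of_ne hne with h | h
      · exact Or.inl (Or.inr ⟨hm, h⟩)
      · exact Or.inr (Or.inr (Or.inr ⟨hm', h⟩))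
  have irr : ∀ g : G, ¬ R g g := by
    intro g h
    rcases h with ⟨hm, h⟩ | ⟨hm, h⟩
    · have e : (⟨g⁻¹ * g, hm⟩ : MulAction.stabilizer G x) = 1 := by ext; simp
      rw [e] at h
      exact h₀.irrefl 1 h
    · exact lt_irrefl _ h
  have htr : ∀ g₁ g₂ g₃ : G, R g₁ g₂ → R g₂ g₃ → R g₁ g₃ := by
    intro g₁ g₂ g₃ h12 h23
    rcases h12 with ⟨hm12, h12⟩ | ⟨hm12, h12⟩ <;>
      rcases h23 with ⟨hm23, h23⟩ | ⟨hm23, h23⟩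
    · have hm13 : g₁⁻¹ * g₃ ∈ MulAction.stabilizer G x := by
        have := (MulAction.stabilizer G x).mul_mem hm12 hm23
        simpa [mul_assoc] using this
      refine Or.inl ⟨hm13, ?_⟩
      have key := h₀inv ⟨g₁⁻¹ * g₂, hm12⟩ _ _ h23
      have e1 : (⟨g₁⁻¹ * g₂, hm12⟩ : MulAction.stabilizer G x) * 1 = ⟨g₁⁻¹ * g₂, hm12⟩ :=
        mul_one _
      have e2 : (⟨g₁⁻¹ * g₂, hm12⟩ : MulAction.stabilizer G x) * ⟨g₂⁻¹ * g₃, hm23⟩ =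
          ⟨g₁⁻¹ * g₃, hm13⟩ := by
        ext; simp [mul_assoc]
      rw [e1, e2] at key
      exact h₀.trans _ _ _ h12 key
    · have e12 : g₁ • x = g₂ • x := (memiff _ _).mp hm12
      have hm13 : g₁⁻¹ * g₃ ∉ MulAction.stabilizer G x := by
        rw [memiff, e12]; exact fun h => hm23 ((memiff _ _).mpr h)
      exact Or.inr ⟨hm13, e12 ▸ h23⟩
    · have e23 : g₂ • x = g₃ • x := (memiff _ _).mp hm23
      have hm13 : g₁⁻¹ * g₃ ∉ MulAction.stabilizer G x := by
        rw [memiff, ← e23]; exact fun h => hm12 ((memiff _ _).mpr h)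
      exact Or.inr ⟨hm13, e23 ▸ h12⟩
    · have h13 : g₁ • x < g₃ • x := lt_trans h12 h23
      have hm13 : g₁⁻¹ * g₃ ∉ MulAction.stabilizer G x :=
        fun h => absurd ((memiff _ _).mp h) (ne_of_lt h13)
      exact Or.inr ⟨hm13, h13⟩
  refine ⟨R, fun _ _ => Iff.rfl,
    { trichotomous := fun a b h1 h2 => ((tri a b).resolve_left h1).resolve_right h2, irrefl := irr, trans := htr }, ?_, ?_⟩
  · -- left invariance
    intro k g₁ g₂ h
    have e : (k * g₁)⁻¹ * (k * g₂) = g₁⁻¹ * g₂ := by group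
    rcases h with ⟨hm, h⟩ | ⟨hm, h⟩
    · show (∃ _, _) ∨ _
      simp only [e]
      exact Or.inl ⟨hm, h⟩
    · refine Or.inr ⟨by rw [e]; exact hm, ?_⟩
      have := hact k _ _ h
      simpa [mul_smul] using this
  · -- convexity
    intro c₁ hc₁ c₂ hc₂ g h1 h2
    rcases h1 with ⟨hm, _⟩ | ⟨hm, h1⟩
    · have := (MulAction.stabilizer G x).mul_mem hc₁ hm
      simpa [← mul_assoc] using this
    · exfalso
      rcases h2 with ⟨hm', _⟩ | ⟨hm', h2⟩
      · have := (MulAction.stabilizer G x).mul_mem hm' ((MulAction.stabilizer G x).inv_mem hc₂)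
        have hg : g⁻¹ ∈ MulAction.stabilizer G x := by simpa [mul_assoc] using this
        have hg' : g ∈ MulAction.stabilizer G x := by
          simpa using (MulAction.stabilizer G x).inv_mem hg
        exact hm ((MulAction.stabilizer G x).mul_mem ((MulAction.stabilizer G x).inv_mem hc₁) hg')
      · have e1 : c₁ • x = x := hc₁
        have e2 : c₂ • x = x := hc₂
        rw [e1] at h1; rw [e2] at h2
        exact lt_irrefl x (lt_trans h1 h2)
end

section
/- An arbitrary intersection of relatively convex subgroups of a left-orderable group is relatively convex: if G is left-orderable and {Cᵢ} is a family of subgroups such that each Cᵢ is convex with respect to some left-order on G, then ⋂ᵢ Cᵢ is convex with respect to some left-order on G. -/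
/-- A subgroup is relatively convex if it is convex with respect to some left-order. -/
def IsRelativelyConvex {G : Type*} [Group G] (C : Subgroup G) : Prop :=
  ∃ P : Set G, IsLeftOrderCone P ∧ IsConeConvex P C

section Aux

variable {G : Type*} [Group G] {P : Set G} {C : Subgroup G}

/-- If `a ∈ C`, `b` is positive and `a*b ∉ C`, then `a*b` is positive. -/
lemma aux_lemA (hP : IsLeftOrderCone P) (hcvx : IsConeConvex P C)
    {a b : G} (ha : a ∈ C) (hb : b ∈ P) (hab : a * b ∉ C) : a * b ∈ P := by
  by_contra h
  have hne : a * b ≠ 1 := fun h1 => hab (h1 ▸ C.one_mem)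
  have hinv : (a * b)⁻¹ ∈ P := by
    have := (hP.2.2 (a * b)⁻¹ (inv_ne_one.mpr hne)).mpr (by simpa using h)
    exact this
  exact hab (hcvx a ha 1 C.one_mem (a * b) (by simpa using hb) (by simpa using hinv))

/-- If `a ∉ C` is positive and `b ∈ C`, then `a*b` is positive. -/
lemma aux_lemB (hP : IsLeftOrderCone P) (hcvx : IsConeConvex P C)
    {a b : G} (haP : a ∈ P) (haC : a ∉ C) (hb : b ∈ C) : a * b ∈ P := by
  by_contra h
  have habC : a * b ∉ C := fun hmem => haC (by simpa using C.mul_mem hmem (C.inv_mem hb))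
  have hne : a * b ≠ 1 := fun h1 => habC (h1 ▸ C.one_mem)
  have hinv : b⁻¹ * a⁻¹ ∈ P := by
    have := (hP.2.2 (a * b)⁻¹ (inv_ne_one.mpr hne)).mpr (by simpa using h)
    simpa [mul_inv_rev] using this
  have : a⁻¹ ∈ C := hcvx b hb 1 C.one_mem a⁻¹
    (by simpa using hinv) (by simpa using haP)
  exact haC (by simpa using C.inv_mem this)

/-- If `a ∉ C`, `a` and `b` are positive, then `a*b ∉ C`. -/
lemma aux_lemC (hcvx : IsConeConvex P C)
    {a b : G} (haP : a ∈ P) (haC : a ∉ C) (hb : b ∈ P) (hab : a * b ∈ C) : False :=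
  haC (hcvx 1 C.one_mem (a * b) hab a (by simpa using haP) (by simpa using hb))

end Aux

/-- An arbitrary intersection of relatively convex subgroups of a left-orderable
group is relatively convex. -/
theorem iInf_relatively_convex {G : Type*} [Group G]
    (hLO : ∃ P : Set G, IsLeftOrderCone P) {ι : Sort*} (C : ι → Subgroup G)
    (hC : ∀ i, IsRelativelyConvex (C i)) : IsRelativelyConvex (⨅ i, C i) := by
  classical
  obtain ⟨P₀, hP₀⟩ := hLO
  simp only [IsRelativelyConvex] at hC
  choose P hPcone hPcvx using hC
  set D : Subgroup G := ⨅ i, C i with hDdef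
  have hmemD : ∀ g : G, g ∈ D ↔ ∀ i, g ∈ C i := fun g => Subgroup.mem_iInf
  -- the index type as a Type, with a well-order
  set κ := PLift ι with hκ
  set r : κ → κ → Prop := WellOrderingRel with hr
  have hwo : IsWellOrder κ r := WellOrderingRel.isWellOrder
  have hwf : WellFounded r := hwo.wf
  -- `Least g i` : `i` is the least index with `g ∉ C i`
  set Least : G → κ → Prop :=
    fun g i => g ∉ C i.down ∧ ∀ k : κ, r k i → g ∈ C k.down with hLeast
  have hLeastEx : ∀ g : G, g ∉ D → ∃ i, Least g i := by
    intro g hg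
    have hne : {i : κ | g ∉ C i.down}.Nonempty := by
      rw [hmemD] at hg
      obtain ⟨i, hi⟩ := not_forall.mp hg
      exact ⟨PLift.up i, hi⟩
    obtain ⟨i, hi, hmin⟩ := hwf.has_min _ hne
    exact ⟨i, hi, fun k hk => by_contra fun hk' => hmin k hk' hk⟩
  have hLeastUniq : ∀ (g : G) (i j : κ), Least g i → Least g j → i = j := by
    intro g i j hi hj
    rcases (haveI := hwo; trichotomous_of r i j) with h | h | h
    · exact absurd (hj.2 i h) hi.1
    · exact h
    · exact absurd (hi.2 j h) hj.1
  have hLeastInv : ∀ (g : G) (i : κ), Least g i → Least g⁻¹ i := by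
    intro g i hi
    exact ⟨fun h => hi.1 (by simpa using (C i.down).inv_mem h),
      fun k hk => (C k.down).inv_mem (hi.2 k hk)⟩
  have hLeastNotD : ∀ (g : G) (i : κ), Least g i → g ∉ D := by
    intro g i hi hg
    exact hi.1 ((hmemD g).mp hg i.down)
  -- the new positive cone
  set Q : Set G := {g | (g ∈ D ∧ g ∈ P₀) ∨ ∃ i, Least g i ∧ g ∈ P i.down} with hQ
  have hQ_of_D : ∀ g : G, g ∈ D → (g ∈ Q ↔ g ∈ P₀) := by
    intro g hg
    constructor
    · rintro (⟨-, h⟩ | ⟨i, hi, -⟩)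
      · exact h
      · exact absurd hg (hLeastNotD g i hi)
    · intro h; exact Or.inl ⟨hg, h⟩
  have hQ_of_Least : ∀ (g : G) (i : κ), Least g i → (g ∈ Q ↔ g ∈ P i.down) := by
    intro g i hi
    constructor
    · rintro (⟨hgD, -⟩ | ⟨j, hj, hjP⟩)
      · exact absurd hgD (hLeastNotD g i hi)
      · rwa [hLeastUniq g i j hi hj]
    · intro h; exact Or.inr ⟨i, hi, h⟩
  refine ⟨Q, ⟨?_, ?_, ?_⟩, ?_⟩
  · -- closed under multiplication
    rintro a (⟨haD, haP⟩ | ⟨i, hai, haP⟩) b (⟨hbD, hbP⟩ | ⟨j, hbj, hbP⟩)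
    · exact Or.inl ⟨D.mul_mem haD hbD, hP₀.1 a haP b hbP⟩
    · -- a ∈ D, Least b j
      refine Or.inr ⟨j, ⟨?_, ?_⟩, ?_⟩
      · intro h
        exact hbj.1 (by simpa using (C j.down).mul_mem ((C j.down).inv_mem
          ((hmemD a).mp haD j.down)) h)
      · intro k hk
        exact (C k.down).mul_mem ((hmemD a).mp haD k.down) (hbj.2 k hk)
      · exact aux_lemA (hPcone j.down) (hPcvx j.down) ((hmemD a).mp haD j.down) hbP
          (fun h => hbj.1 (by simpa using (C j.down).mul_mem ((C j.down).inv_mem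
            ((hmemD a).mp haD j.down)) h))
    · -- Least a i, b ∈ D
      have habC : a * b ∉ C i.down := fun h => hai.1
        (by simpa using (C i.down).mul_mem h ((C i.down).inv_mem ((hmemD b).mp hbD i.down)))
      refine Or.inr ⟨i, ⟨habC, fun k hk =>
        (C k.down).mul_mem (hai.2 k hk) ((hmemD b).mp hbD k.down)⟩, ?_⟩
      exact aux_lemB (hPcone i.down) (hPcvx i.down) haP hai.1 ((hmemD b).mp hbD i.down)
    · -- Least a i, Least b j
      rcases (haveI := hwo; trichotomous_of r i j) with h | h | h
      · -- i < j : b ∈ C i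
        have hbCi : b ∈ C i.down := hbj.2 i h
        have habC : a * b ∉ C i.down := fun hm => hai.1
          (by simpa using (C i.down).mul_mem hm ((C i.down).inv_mem hbCi))
        refine Or.inr ⟨i, ⟨habC, fun k hk =>
          (C k.down).mul_mem (hai.2 k hk) (hbj.2 k (haveI := hwo; trans_of r hk h))⟩, ?_⟩
        exact aux_lemB (hPcone i.down) (hPcvx i.down) haP hai.1 hbCi
      · -- i = j
        subst h
        have habC : a * b ∉ C i.down := fun hm =>
          aux_lemC (hPcvx i.down) haP hai.1 hbP hm
        exact Or.inr ⟨i, ⟨habC, fun k hk =>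
          (C k.down).mul_mem (hai.2 k hk) (hbj.2 k hk)⟩,
          (hPcone i.down).1 a haP b hbP⟩
      · -- j < i : a ∈ C j
        have haCj : a ∈ C j.down := hai.2 j h
        have habC : a * b ∉ C j.down := fun hm => hbj.1
          (by simpa using (C j.down).mul_mem ((C j.down).inv_mem haCj) hm)
        refine Or.inr ⟨j, ⟨habC, fun k hk =>
          (C k.down).mul_mem (hai.2 k (haveI := hwo; trans_of r hk h)) (hbj.2 k hk)⟩, ?_⟩
        exact aux_lemA (hPcone j.down) (hPcvx j.down) haCj hbP habC
  · -- 1 ∉ Q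
    rintro (⟨-, h⟩ | ⟨i, hi, -⟩)
    · exact hP₀.2.1 h
    · exact hi.1 (C i.down).one_mem
  · -- inverse dichotomy
    intro g hg
    by_cases hgD : g ∈ D
    · have hgiD : g⁻¹ ∈ D := D.inv_mem hgD
      rw [hQ_of_D g hgD, hQ_of_D g⁻¹ hgiD]
      exact hP₀.2.2 g hg
    · obtain ⟨i, hi⟩ := hLeastEx g hgD
      rw [hQ_of_Least g i hi, hQ_of_Least g⁻¹ i (hLeastInv g i hi)]
      exact (hPcone i.down).2.2 g hg
  · -- convexity of D with respect to Q
    intro c₁ hc₁ c₂ hc₂ g h₁ h₂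
    by_contra hgD
    obtain ⟨i, hi⟩ := hLeastEx g hgD
    have hL₁ : Least (c₁⁻¹ * g) i := by
      refine ⟨fun hm => hi.1 ?_, fun k hk =>
        (C k.down).mul_mem ((C k.down).inv_mem ((hmemD c₁).mp hc₁ k.down)) (hi.2 k hk)⟩
      have := (C i.down).mul_mem ((hmemD c₁).mp hc₁ i.down) hm
      simpa using this
    have hL₂ : Least (g⁻¹ * c₂) i := by
      refine ⟨fun hm => hi.1 ?_, fun k hk =>
        (C k.down).mul_mem ((C k.down).inv_mem (hi.2 k hk)) ((hmemD c₂).mp hc₂ k.down)⟩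
      have := (C i.down).mul_mem hm ((C i.down).inv_mem ((hmemD c₂).mp hc₂ i.down))
      simpa using ((C i.down).inv_mem this)
    have hp₁ : c₁⁻¹ * g ∈ P i.down := (hQ_of_Least _ i hL₁).mp h₁
    have hp₂ : g⁻¹ * c₂ ∈ P i.down := (hQ_of_Least _ i hL₂).mp h₂
    exact hi.1 (hPcvx i.down c₁ ((hmemD c₁).mp hc₁ i.down) c₂
      ((hmemD c₂).mp hc₂ i.down) g hp₁ hp₂)
end

section
/- For left-orders on ℤ², every element of the positive cone off a determining line of irrational slope is cofinal: let < be a left-invariant total order on ℤ² and suppose L ⊂ ℝ² is a line through the origin containing no nonzero lattice point, such that every lattice point on one side of L is positive and every lattice point on the other side is negative. Then for each nonzero v ∈ ℤ², the cyclic subgroup ⟨v⟩ is cofinal: for every w ∈ ℤ² there exist m, n ∈ ℤ with mv < w < nv. -/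
/-- For a left-order `r` on `ℤ²` whose determining line (through the origin, given
by the equation `a·x + b·y = 0`) contains no nonzero lattice point — lattice points
on one side being positive and on the other side negative — every nonzero `v ∈ ℤ²`
generates a cofinal cyclic subgroup: every `w` lies between two multiples of `v`. -/
theorem cofinal_of_irrational_slope (r : ℤ × ℤ → ℤ × ℤ → Prop)
    (hord : IsStrictTotalOrder (ℤ × ℤ) r)
    (hinv : ∀ k u v : ℤ × ℤ, r u v → r (k + u) (k + v)) (a b : ℝ)
    (hab : (a, b) ≠ ((0 : ℝ), (0 : ℝ)))
    (hirr : ∀ v : ℤ × ℤ, v ≠ 0 → a * (v.1 : ℝ) + b * (v.2 : ℝ) ≠ 0)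
    (hpos : ∀ v : ℤ × ℤ, 0 < a * (v.1 : ℝ) + b * (v.2 : ℝ) → r 0 v)
    (hneg : ∀ v : ℤ × ℤ, a * (v.1 : ℝ) + b * (v.2 : ℝ) < 0 → r v 0) :
    ∀ v : ℤ × ℤ, v ≠ 0 → ∀ w : ℤ × ℤ, ∃ m n : ℤ, r (m • v) w ∧ r w (n • v) := by
  intro v hv w
  set f : ℤ × ℤ → ℝ := fun u => a * (u.1 : ℝ) + b * (u.2 : ℝ) with hf
  have hfv : f v ≠ 0 := hirr v hv
  have hsmul : ∀ (k : ℤ), f (k • v) = (k : ℝ) * f v := by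
    intro k
    simp only [hf, Prod.smul_fst, Prod.smul_snd, smul_eq_mul]
    push_cast
    ring
  -- find n with f w < n * f v, and m with m * f v < f w
  have key : ∃ m n : ℤ, (m : ℝ) * f v < f w ∧ f w < (n : ℝ) * f v := by
    obtain ⟨k, hk⟩ := exists_nat_gt (|f w| / |f v|)
    have hfv' : 0 < |f v| := abs_pos.mpr hfv
    have hk' : |f w| < (k : ℝ) * |f v| := by
      rwa [div_lt_iff₀ hfv'] at hk
    rcases hfv.lt_or_gt with h | h
    · refine ⟨k, -k, ?_, ?_⟩
      · have := neg_abs_le (f w)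
        push_cast
        nlinarith [abs_of_neg h]
      · have := le_abs_self (f w)
        push_cast
        nlinarith [abs_of_neg h]
    · refine ⟨-k, k, ?_, ?_⟩
      · have := neg_abs_le (f w)
        push_cast
        nlinarith [abs_of_pos h]
      · have := le_abs_self (f w)
        push_cast
        nlinarith [abs_of_pos h]
  obtain ⟨m, n, hm, hn⟩ := key
  refine ⟨m, n, ?_, ?_⟩
  · have h1 : f (w - m • v) > 0 := by
      have : f (w - m • v) = f w - (m : ℝ) * f v := by
        simp only [hf]; push_cast [Prod.fst_sub, Prod.snd_sub, Prod.smul_fst, Prod.smul_snd, smul_eq_mul]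
        ring
      rw [this]; linarith
    have := hpos _ h1
    have := hinv (m • v) _ _ this
    simpa using this
  · have h1 : f (w - n • v) < 0 := by
      have : f (w - n • v) = f w - (n : ℝ) * f v := by
        simp only [hf]; push_cast [Prod.fst_sub, Prod.snd_sub, Prod.smul_fst, Prod.smul_snd, smul_eq_mul]
        ring
      rw [this]; linarith
    have := hneg _ h1
    have := hinv (n • v) _ _ this
    simpa using this
end

section
/- For a left-order < on ℤ² whose determining line has rational slope with L ∩ ℤ² = ⟨α⟩ (α primitive), the subgroup ⟨α⟩ is convex with respect to <. -/
/-- For a left-order `r` on `ℤ²` whose determining line `L = {a·x + b·y = 0}`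
has rational slope with `L ∩ ℤ² = ⟨α⟩` (`α` primitive), the subgroup `⟨α⟩` is
convex with respect to `r`. -/
theorem rational_slope_line_subgroup_convex (r : ℤ × ℤ → ℤ × ℤ → Prop)
    (hord : IsStrictTotalOrder (ℤ × ℤ) r)
    (hinv : ∀ k u v : ℤ × ℤ, r u v → r (k + u) (k + v)) (a b : ℝ)
    (hab : (a, b) ≠ ((0 : ℝ), (0 : ℝ))) (α : ℤ × ℤ) (hα : α ≠ 0)
    (hprim : IsCoprime α.1 α.2)
    (hline : ∀ v : ℤ × ℤ, a * (v.1 : ℝ) + b * (v.2 : ℝ) = 0 ↔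
      v ∈ AddSubgroup.zmultiples α)
    (hpos : ∀ v : ℤ × ℤ, 0 < a * (v.1 : ℝ) + b * (v.2 : ℝ) → r 0 v)
    (hneg : ∀ v : ℤ × ℤ, a * (v.1 : ℝ) + b * (v.2 : ℝ) < 0 → r v 0) :
    ∀ c₁ ∈ AddSubgroup.zmultiples α, ∀ c₂ ∈ AddSubgroup.zmultiples α,
      ∀ g : ℤ × ℤ, r c₁ g → r g c₂ → g ∈ AddSubgroup.zmultiples α := by
  intro c₁ hc₁ c₂ hc₂ g h₁ h₂
  by_contra hg
  have hirr := hord.irrefl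
  have htr := hord.trans
  have hfc₁ : a * (c₁.1 : ℝ) + b * (c₁.2 : ℝ) = 0 := (hline c₁).mpr hc₁
  have hfc₂ : a * (c₂.1 : ℝ) + b * (c₂.2 : ℝ) = 0 := (hline c₂).mpr hc₂
  have hfg : a * (g.1 : ℝ) + b * (g.2 : ℝ) ≠ 0 := fun h => hg ((hline g).mp h)
  rcases lt_or_gt_of_ne hfg with hlt | hgt
  · -- f(g) < 0: show r g c₁, contradiction with r c₁ g
    have h3 : a * ((g - c₁).1 : ℝ) + b * ((g - c₁).2 : ℝ) < 0 := by
      simp only [Prod.fst_sub, Prod.snd_sub, Int.cast_sub]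
      nlinarith
    have h4 := hneg _ h3
    have h5 := hinv c₁ (g - c₁) 0 h4
    simp only [add_sub_cancel, add_zero] at h5
    exact hirr g (htr _ _ _ h5 h₁)
  · have h3 : 0 < a * ((g - c₂).1 : ℝ) + b * ((g - c₂).2 : ℝ) := by
      simp only [Prod.fst_sub, Prod.snd_sub, Int.cast_sub]
      nlinarith
    have h4 := hpos _ h3
    have h5 := hinv c₂ 0 (g - c₂) h4
    simp only [add_sub_cancel, add_zero] at h5
    exact hirr g (htr _ _ _ h₂ h5)
end
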